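/- Let S be a set, D ≥ 1, and let P, Q be set-polynomials Finset S → Finset(S^D). If n ⊆ S is a finite set with n ∩ supp(Q) = ∅, then for any finite m ⊆ S, P(n) ∩ Q(m) ⊆ P(n ∩ m). -/
import Mathlib


/-- A set-polynomial on `S` with values in `Finset (S^D)`, given by its coefficients:
for each `α ⊆ {1,…,D}`, a finite set of tuples indexed by the complement of `α`. -/
structure SetPolynomial (S : Type*) (D : ℕ) where
  coeff : (α : Finset (Fin D)) → Finset ({i : Fin D // i ∉ α} → S)

namespace SetPolynomial

variable {S : Type*} {D : ℕ}

/-- Evaluation of a set-polynomial: `P(n)` is the union over `α ⊆ {1,…,D}` of the set of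
`D`-tuples `s` whose restriction to the complement of `α` lies in the coefficient `P_α`
and whose coordinates in `α` all lie in `n`. -/
def eval [DecidableEq S] (P : SetPolynomial S D) (n : Finset S) : Finset (Fin D → S) :=
  Finset.univ.biUnion fun α : Finset (Fin D) =>
    (P.coeff α ×ˢ Fintype.piFinset fun _ : {i : Fin D // i ∈ α} => n).image
      fun p => fun i : Fin D => if h : i ∈ α then p.2 ⟨i, h⟩ else p.1 ⟨i, h⟩

/-- The support of a set-polynomial: the union of all coordinates of all points
of all its coefficients. -/
def supp [DecidableEq S] (P : SetPolynomial S D) : Finset S :=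
  Finset.univ.biUnion fun α : Finset (Fin D) =>
    (P.coeff α).biUnion fun f => Finset.image f Finset.univ

/-- The degree of a set-polynomial: the largest `|α|` with `P_α ≠ ∅` (and `0` for the
empty set-polynomial). -/
def deg (P : SetPolynomial S D) : ℕ :=
  (Finset.univ.filter fun α : Finset (Fin D) => (P.coeff α).Nonempty).sup Finset.card

/-- `Q` is dominated by `P` : coefficient-wise containment. -/
def Dominated (Q P : SetPolynomial S D) : Prop := ∀ α, Q.coeff α ⊆ P.coeff α

/-- The difference of set-polynomials: coefficient-wise set difference. -/
def sub [DecidableEq S] (P Q : SetPolynomial S D) : SetPolynomial S D :=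
  ⟨fun α => P.coeff α \ Q.coeff α⟩

/-- Equivalence of set-polynomials: the same degree and the same leading coefficients. -/
def Equiv (P P' : SetPolynomial S D) : Prop :=
  P.deg = P'.deg ∧ ∀ α : Finset (Fin D), α.card = P.deg → P.coeff α = P'.coeff α

end SetPolynomial

/-- Lemma 2.7 (6): if `n` is disjoint from `supp Q`, then
`P(n) ∩ Q(m) ⊆ P(n ∩ m)` for all finite `m`. -/
theorem setPolynomial_inter_subset {S : Type*} [DecidableEq S] {D : ℕ} (hD : 1 ≤ D)
    (P Q : SetPolynomial S D) (n m : Finset S) (h : Disjoint n Q.supp) :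
    P.eval n ∩ Q.eval m ⊆ P.eval (n ∩ m) := by
  intro x hx
  rw [Finset.mem_inter] at hx
  obtain ⟨hP, hQ⟩ := hx
  simp only [SetPolynomial.eval, Finset.mem_biUnion, Finset.mem_univ, true_and,
    Finset.mem_image, Finset.mem_product, Fintype.mem_piFinset, Prod.exists] at hP hQ ⊢
  obtain ⟨α, p, f, ⟨hp, hf⟩, hxp⟩ := hP
  obtain ⟨β, q, g, ⟨hq, hg⟩, hxq⟩ := hQ
  refine ⟨α, p, f, ⟨hp, fun i => ?_⟩, hxp⟩
  have hfx : f i = x i.1 := by rw [← hxp]; simp [i.2]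
  have hn : x i.1 ∈ n := hfx ▸ hf i
  rw [hfx, Finset.mem_inter]
  refine ⟨hn, ?_⟩
  by_cases hiβ : (i : Fin D) ∈ β
  · have := hg ⟨i, hiβ⟩
    have hx' : x i.1 = g ⟨i.1, hiβ⟩ := by rw [← hxq]; simp [hiβ]
    rwa [← hx'] at this
  · exfalso
    have hsupp : x i.1 ∈ Q.supp := by
      simp only [SetPolynomial.supp, Finset.mem_biUnion, Finset.mem_univ, true_and,
        Finset.mem_image]
      refine ⟨β, q, hq, ⟨i.1, hiβ⟩, ?_⟩
      rw [← hxq]; simp [hiβ]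
    exact Finset.disjoint_left.mp h hn hsupp
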